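/- arXiv:1811.02699 — 2 statements merged into one kernel-verified Lean document; each statement's English description precedes it below -/
import Mathlib

section
/- Let D be an almost valid drawing (with threshold δ) of a finite signed graph G in the circumference, and let a be a vertex violating strict validity. Let ε = (1/4)·min over vertices i of d(D(i), D(next(i))) > 0, where next(i) is the cyclic successor of i in the circular order induced by D. Then the drawing D' obtained from D by moving a by ε (in the direction away from its farthest right-half positive neighbor at distance δ) is an almost valid drawing in which a satisfies the strict validity condition, and every vertex that satisfied strict validity in D still satisfies it in D'. -/
open Real Set

noncomputable def cmod (x : ℝ) : ℝ := x - 2 * π * ⌊x / (2 * π)⌋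

noncomputable def cdist (p q : ℝ) : ℝ := min (cmod (p - q)) (cmod (q - p))

def Mr (p : ℝ) : Set ℝ := {x | ∃ t, 0 ≤ t ∧ t ≤ π ∧ x = cmod (p + t)}
def Ml (p : ℝ) : Set ℝ := {x | ∃ t, 0 ≤ t ∧ t ≤ π ∧ x = cmod (p - t)}

structure SignedGraph (V : Type*) where
  pos : SimpleGraph V
  neg : SimpleGraph V
  disjoint : ∀ i j, ¬ (pos.Adj i j ∧ neg.Adj i j)

def IsDrawing {V : Type*} (D : V → ℝ) : Prop :=
  Function.Injective D ∧ ∀ v, D v ∈ Set.Ico (0 : ℝ) (2 * π)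

def IsValidDrawing {V : Type*} (G : SignedGraph V) (D : V → ℝ) : Prop :=
  IsDrawing D ∧ ∀ i j k, G.pos.Adj i j → G.neg.Adj i k →
    cdist (D i) (D j) < cdist (D i) (D k)

def IsAlmostValidDrawing {V : Type*} (G : SignedGraph V) (D : V → ℝ) : Prop :=
  IsDrawing D ∧ ∃ δ > 0, ∀ i j k, G.pos.Adj i j → G.neg.Adj i k →
    cdist (D i) (D j) ≤ δ ∧ δ ≤ cdist (D i) (D k)

def arcC (s ℓ : ℝ) : Set ℝ := {x | x ∈ Set.Ico (0 : ℝ) (2 * π) ∧ cmod (x - s) ≤ ℓ}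

def arcGen (s ℓ : ℝ) (inl inr : Bool) : Set ℝ :=
  {x | x ∈ Set.Ico (0 : ℝ) (2 * π) ∧
    (inl = false → 0 < cmod (x - s)) ∧
    (inr = true → cmod (x - s) ≤ ℓ) ∧ (inr = false → cmod (x - s) < ℓ)}

def IsCircularArcModel {V : Type*} (G : SimpleGraph V) (A : V → Set ℝ) : Prop :=
  (∀ v, ∃ s ℓ, 0 < ℓ ∧ ℓ < 2 * π ∧ A v = arcC s ℓ) ∧
  ∀ i j, i ≠ j → (G.Adj i j ↔ (A i ∩ A j).Nonempty)

def IsCircularArcGraph {V : Type*} (G : SimpleGraph V) : Prop :=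
  ∃ A, IsCircularArcModel G A

def IsProperCircularArcGraph {V : Type*} (G : SimpleGraph V) : Prop :=
  ∃ A : V → Set ℝ, IsCircularArcModel G A ∧ ∀ i j, ¬ A i ⊂ A j

/-! ### Auxiliary lemmas about `cmod` and `cdist` -/

lemma cmod_eq_fract (x : ℝ) : cmod x = 2 * π * Int.fract (x / (2 * π)) := by
  unfold cmod Int.fract
  have h : (2 * π) ≠ 0 := ne_of_gt Real.two_pi_pos
  field_simp

lemma cmod_nonneg (x : ℝ) : 0 ≤ cmod x := by
  rw [cmod_eq_fract]
  exact mul_nonneg (le_of_lt Real.two_pi_pos) (Int.fract_nonneg _)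

lemma cmod_lt (x : ℝ) : cmod x < 2 * π := by
  rw [cmod_eq_fract]
  nlinarith [Int.fract_lt_one (x / (2 * π)), Real.two_pi_pos]

lemma cmod_eq_self {x : ℝ} (h0 : 0 ≤ x) (h1 : x < 2 * π) : cmod x = x := by
  unfold cmod
  have h2 : ⌊x / (2 * π)⌋ = 0 := by
    rw [Int.floor_eq_zero_iff]
    constructor
    · positivity
    · rw [div_lt_one Real.two_pi_pos] at *
      linarith [(div_lt_one Real.two_pi_pos).mpr h1]
  rw [h2]; push_cast; ring

lemma cmod_zero : cmod 0 = 0 := cmod_eq_self le_rfl Real.two_pi_pos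

lemma cmod_add_int (x : ℝ) (n : ℤ) : cmod (x + 2 * π * n) = cmod x := by
  unfold cmod
  have h : (x + 2 * π * n) / (2 * π) = x / (2 * π) + n := by
    field_simp
  rw [h, Int.floor_add_intCast]
  push_cast; ring

lemma cmod_sub_int (x : ℝ) (n : ℤ) : cmod (x - 2 * π * n) = cmod x := by
  have := cmod_add_int (x - 2 * π * n) n
  rw [show x - 2 * π * n + 2 * π * n = x by ring] at this
  exact this.symm

lemma cmod_key (y z : ℝ) : cmod (cmod y - z) = cmod (y - z) := by
  have h : cmod y - z = (y - z) - 2 * π * (⌊y / (2 * π)⌋ : ℤ) := by unfold cmod; ring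
  rw [h, cmod_sub_int]

lemma cmod_key' (y z : ℝ) : cmod (z - cmod y) = cmod (z - y) := by
  have h : z - cmod y = (z - y) + 2 * π * (⌊y / (2 * π)⌋ : ℤ) := by unfold cmod; ring
  rw [h, cmod_add_int]

lemma cmod_neg {x : ℝ} (h : cmod x ≠ 0) : cmod (-x) = 2 * π - cmod x := by
  have hf : Int.fract (x / (2 * π)) ≠ 0 := by
    intro h0
    apply h
    rw [cmod_eq_fract, h0, mul_zero]
  rw [cmod_eq_fract, cmod_eq_fract, show -x / (2 * π) = -(x / (2 * π)) by ring,
    Int.fract_neg hf]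
  ring

lemma cmod_pos_of_ne {p q : ℝ} (hp0 : 0 ≤ p) (hp1 : p < 2 * π) (hq0 : 0 ≤ q)
    (hq1 : q < 2 * π) (hne : p ≠ q) : 0 < cmod (q - p) := by
  rcases (cmod_nonneg (q - p)).lt_or_eq with h | h
  · exact h
  · exfalso
    have h2 : q - p = 2 * π * (⌊(q - p) / (2 * π)⌋ : ℤ) := by
      unfold cmod at h; linarith
    set n : ℤ := ⌊(q - p) / (2 * π)⌋ with hn
    have hb1 : -(2 * π) < 2 * π * (n : ℝ) := by rw [← h2]; linarith
    have hb2 : 2 * π * (n : ℝ) < 2 * π := by rw [← h2]; linarith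
    have h3 : (-1 : ℝ) < (n : ℝ) := by nlinarith [Real.two_pi_pos]
    have h4 : ((n : ℝ)) < 1 := by nlinarith [Real.two_pi_pos]
    have h5 : n = 0 := by
      have h6 : (-1 : ℤ) < n := by exact_mod_cast h3
      have h7 : n < (1 : ℤ) := by exact_mod_cast h4
      omega
    rw [h5] at h2
    push_cast at h2
    exact hne (by linarith)

lemma cdist_symm (p q : ℝ) : cdist p q = cdist q p := min_comm _ _

lemma cdist_eq_min {p q : ℝ} (h : cmod (q - p) ≠ 0) :
    cdist p q = min (cmod (q - p)) (2 * π - cmod (q - p)) := by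
  unfold cdist
  rw [show p - q = -(q - p) by ring, cmod_neg h, min_comm]

lemma cdist_le_pi (p q : ℝ) : cdist p q ≤ π := by
  by_cases h : cmod (q - p) = 0
  · unfold cdist
    rw [h]
    exact le_trans (min_le_right _ _) (le_of_lt Real.pi_pos)
  · rw [cdist_eq_min h]
    rcases le_total (cmod (q - p)) π with h1 | h1
    · exact le_trans (min_le_left _ _) h1
    · exact le_trans (min_le_right _ _) (by linarith)

lemma cdist_shift {p q ε : ℝ} (hε : 0 < ε) (hθ : ε < cmod (q - p)) :
    cdist (cmod (p + ε)) q = min (cmod (q - p) - ε) (2 * π - (cmod (q - p) - ε)) := by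
  have h1 : cmod (q - cmod (p + ε)) = cmod (q - p) - ε := by
    rw [cmod_key', show q - (p + ε) = (q - p) - ε by ring, ← cmod_key (q - p) ε]
    exact cmod_eq_self (by linarith) (by linarith [cmod_lt (q - p)])
  have h2 : cmod (q - cmod (p + ε)) ≠ 0 := by rw [h1]; exact ne_of_gt (by linarith)
  rw [cdist_eq_min h2, h1]

/-- One step of the correction procedure: D is an almost valid drawing with
threshold δ of a finite signed graph G, and the vertex a violates strict
validity, with its farthest right-half positive neighbor jr at distance
exactly δ and its closest left-half negative neighbor kl at distance exactly
δ. Let ε be a quarter of the minimum gap between (images of) consecutive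
vertices in the cyclic order induced by D, i.e. a quarter of the minimum of
cdist over distinct pairs of vertices. Then the drawing D' obtained by moving
a by ε (towards the right half, i.e. away from kl) is still almost valid with
threshold δ, the vertex a now satisfies the strict validity condition, and
every vertex that satisfied strict validity in D still satisfies it in D'. -/
theorem move_vertex_step {V : Type*} [Fintype V] [DecidableEq V]
    (G : SignedGraph V) (D : V → ℝ) (hD : IsDrawing D)
    (δ : ℝ) (hδpos : 0 < δ)
    (halmost : ∀ i j k, G.pos.Adj i j → G.neg.Adj i k →
      cdist (D i) (D j) ≤ δ ∧ δ ≤ cdist (D i) (D k))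
    (a jr kl : V)
    (hjr : G.pos.Adj a jr) (hjrR : D jr ∈ Mr (D a))
    (hjrδ : cdist (D a) (D jr) = δ)
    (hjrmax : ∀ j, G.pos.Adj a j → D j ∈ Mr (D a) →
      cdist (D a) (D j) ≤ cdist (D a) (D jr))
    (hkl : G.neg.Adj a kl) (hklL : D kl ∈ Ml (D a))
    (hklδ : cdist (D a) (D kl) = δ)
    (hklmin : ∀ k, G.neg.Adj a k → D k ∈ Ml (D a) →
      cdist (D a) (D kl) ≤ cdist (D a) (D k))
    (ε : ℝ)
    (hεlb : ∀ i j : V, i ≠ j → 4 * ε ≤ cdist (D i) (D j))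
    (hεmin : ∃ i j : V, i ≠ j ∧ 4 * ε = cdist (D i) (D j))
    (D' : V → ℝ)
    (hD' : D' = fun i => if i = a then cmod (D a + ε) else D i) :
    IsDrawing D' ∧
    (∀ i j k, G.pos.Adj i j → G.neg.Adj i k →
      cdist (D' i) (D' j) ≤ δ ∧ δ ≤ cdist (D' i) (D' k)) ∧
    (∀ j k, G.pos.Adj a j → G.neg.Adj a k →
      cdist (D' a) (D' j) < cdist (D' a) (D' k)) ∧
    (∀ b : V,
      (∀ j k, G.pos.Adj b j → G.neg.Adj b k →
        cdist (D b) (D j) < cdist (D b) (D k)) →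
      (∀ j k, G.pos.Adj b j → G.neg.Adj b k →
        cdist (D' b) (D' j) < cdist (D' b) (D' k))) := by
  obtain ⟨hinj, hrange⟩ := hD
  have hπ : 0 < π := Real.pi_pos
  set θ : V → ℝ := fun x => cmod (D x - D a) with hθdef
  have hθlt : ∀ x, θ x < 2 * π := fun x => cmod_lt _
  have hθnn : ∀ x, 0 ≤ θ x := fun x => cmod_nonneg _
  have hθpos : ∀ x, x ≠ a → 0 < θ x := by
    intro x hx
    exact cmod_pos_of_ne ((hrange a).1) ((hrange a).2) ((hrange x).1) ((hrange x).2)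
      (fun h => hx (hinj h.symm))
  have hθdiff : ∀ x y, cmod (D x - D y) = cmod (θ x - θ y) := by
    intro x y
    simp only [hθdef]
    rw [cmod_key, cmod_key', show D x - D a - (D y - D a) = D x - D y from by ring]
  have hθinj : ∀ x y : V, x ≠ y → θ x ≠ θ y := by
    intro x y hxy h
    have h1 : 0 < cmod (D x - D y) :=
      cmod_pos_of_ne ((hrange y).1) ((hrange y).2) ((hrange x).1) ((hrange x).2)
        (fun h2 => hxy ((hinj h2).symm))
    rw [hθdiff x y, h, sub_self, cmod_zero] at h1
    exact lt_irrefl 0 h1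
  have hcd : ∀ x, x ≠ a → cdist (D a) (D x) = min (θ x) (2 * π - θ x) := by
    intro x hx
    exact cdist_eq_min (ne_of_gt (hθpos x hx))
  have hεpos : 0 < ε := by
    obtain ⟨i, j, hij, hε4⟩ := hεmin
    have h1 : 0 < cmod (D j - D i) :=
      cmod_pos_of_ne ((hrange i).1) ((hrange i).2) ((hrange j).1) ((hrange j).2)
        (fun h => hij (hinj h))
    have h2 : 0 < cmod (D i - D j) :=
      cmod_pos_of_ne ((hrange j).1) ((hrange j).2) ((hrange i).1) ((hrange i).2)
        (fun h => hij (hinj h.symm))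
    have h3 : 0 < cdist (D i) (D j) := lt_min h2 h1
    linarith [hε4, h3]
  have hθ4 : ∀ x, x ≠ a → 4 * ε ≤ θ x := by
    intro x hx
    have h1 := hεlb a x (fun h => hx h.symm)
    rw [hcd x hx] at h1
    exact le_trans h1 (min_le_left _ _)
  have hcd' : ∀ x, x ≠ a →
      cdist (cmod (D a + ε)) (D x) = min (θ x - ε) (2 * π - (θ x - ε)) := by
    intro x hx
    exact cdist_shift hεpos (by linarith [hθ4 x hx])
  have hajr : a ≠ jr := hjr.ne
  have hakl : a ≠ kl := hkl.ne
  have hjrkl : jr ≠ kl := by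
    intro h; exact G.disjoint a kl ⟨h ▸ hjr, hkl⟩
  obtain ⟨tjr, htjr0, htjr1, hDjr⟩ := hjrR
  have hθjrt : θ jr = tjr := by
    show cmod (D jr - D a) = tjr
    rw [hDjr, cmod_key, show D a + tjr - D a = tjr from by ring]
    exact cmod_eq_self htjr0 (by linarith)
  have hθjrπ : θ jr ≤ π := by rw [hθjrt]; exact htjr1
  have hθjrδ : θ jr = δ := by
    have h2 := hjrδ
    rw [hcd jr (Ne.symm hajr), min_eq_left (by linarith)] at h2
    exact h2
  obtain ⟨tkl, htkl0, htkl1, hDkl⟩ := hklL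
  have hθklt : θ kl = cmod (-tkl) := by
    show cmod (D kl - D a) = cmod (-tkl)
    rw [hDkl, cmod_key, show D a - tkl - D a = -tkl from by ring]
  have hθklπ : π ≤ θ kl := by
    have hpos := hθpos kl (Ne.symm hakl)
    rcases eq_or_lt_of_le htkl0 with h | h
    · exfalso
      rw [hθklt, ← h, neg_zero, cmod_zero] at hpos
      exact lt_irrefl 0 hpos
    · have hc : cmod tkl = tkl := cmod_eq_self htkl0 (by linarith)
      have hneg : cmod (-tkl) = 2 * π - cmod tkl :=
        cmod_neg (by rw [hc]; exact ne_of_gt h)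
      rw [hθklt, hneg, hc]; linarith
  have hθklδ : θ kl = 2 * π - δ := by
    have h2 := hklδ
    rw [hcd kl (Ne.symm hakl), min_eq_right (by linarith)] at h2
    linarith
  have hδπ : δ ≤ π := by linarith [hθjrπ, hθjrδ.symm.le, hθjrδ.le]
  have hδ2 : δ + 2 * ε ≤ π := by
    have hne : θ jr ≠ θ kl := hθinj jr kl hjrkl
    have hδltπ : δ < π := by
      rcases lt_or_eq_of_le hδπ with h | h
      · exact h
      · exfalso; apply hne; rw [hθjrδ, hθklδ, h]; ring
    have h1 := hεlb jr kl hjrkl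
    have h2 : cmod (D kl - D jr) = 2 * π - 2 * δ := by
      rw [hθdiff kl jr, hθklδ, hθjrδ, show 2 * π - δ - δ = 2 * π - 2 * δ from by ring]
      exact cmod_eq_self (by linarith) (by linarith)
    rw [cdist_eq_min (by rw [h2]; exact ne_of_gt (by linarith)), h2] at h1
    have h3 := le_trans h1 (min_le_left _ _)
    linarith
  have hP : ∀ j, G.pos.Adj a j → cdist (cmod (D a + ε)) (D j) ≤ δ - ε := by
    intro j hj
    have hja : j ≠ a := hj.ne'
    have hle := (halmost a j kl hj hkl).1
    rw [hcd j hja] at hle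
    rw [hcd' j hja]
    rcases le_or_gt (θ j) π with hc | hc
    · rw [min_eq_left (by linarith)] at hle
      exact le_trans (min_le_left _ _) (by linarith)
    · rw [min_eq_right (by linarith)] at hle
      have hjkl : j ≠ kl := by intro h; exact G.disjoint a kl ⟨h ▸ hj, hkl⟩
      have hklj : θ kl < θ j := by
        rcases lt_trichotomy (θ kl) (θ j) with h | h | h
        · exact h
        · exact absurd h.symm (hθinj j kl hjkl)
        · exfalso; rw [hθklδ] at h; linarith
      have h2 : cmod (D j - D kl) = θ j - θ kl := by
        rw [hθdiff j kl]
        exact cmod_eq_self (by linarith) (by linarith [hθlt j, hθnn kl])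
      have h1 := hεlb kl j (Ne.symm hjkl)
      rw [cdist_eq_min (by rw [h2]; exact ne_of_gt (by linarith)), h2] at h1
      have h3 := le_trans h1 (min_le_left _ _)
      rw [hθklδ] at h3
      refine le_trans (min_le_right _ _) ?_
      linarith
  have hN : ∀ k, G.neg.Adj a k → δ + ε ≤ cdist (cmod (D a + ε)) (D k) := by
    intro k hk
    have hka : k ≠ a := hk.ne'
    have hge := (halmost a jr k hjr hk).2
    rw [hcd k hka] at hge
    rw [hcd' k hka]
    rcases le_or_gt (θ k) π with hc | hc
    · have hδθ : δ ≤ θ k := le_trans hge (min_le_left _ _)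
      have hkjr : k ≠ jr := by intro h; exact G.disjoint a jr ⟨hjr, h ▸ hk⟩
      have hjrk : θ jr < θ k := by
        rcases lt_trichotomy (θ jr) (θ k) with h | h | h
        · exact h
        · exact absurd h (hθinj jr k (Ne.symm hkjr))
        · exfalso; rw [hθjrδ] at h; linarith
      have h2 : cmod (D k - D jr) = θ k - θ jr := by
        rw [hθdiff k jr]
        exact cmod_eq_self (by linarith) (by linarith [hθlt k, hθnn jr])
      have h1 := hεlb jr k (Ne.symm hkjr)
      rw [cdist_eq_min (by rw [h2]; exact ne_of_gt (by linarith)), h2] at h1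
      have h3 := le_trans h1 (min_le_left _ _)
      rw [hθjrδ] at h3
      exact le_min (by linarith) (by linarith)
    · have hδθ : δ ≤ 2 * π - θ k := le_trans hge (min_le_right _ _)
      exact le_min (by linarith) (by linarith)
  have hD'a : D' a = cmod (D a + ε) := by rw [hD']; simp
  have hD'x : ∀ x, x ≠ a → D' x = D x := by intro x hx; rw [hD']; simp [hx]
  have hdraw : IsDrawing D' := by
    constructor
    · intro x y hxy
      by_cases hx : x = a <;> by_cases hy : y = a
      · rw [hx, hy]
      · exfalso
        rw [hx, hD'a, hD'x y hy] at hxy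
        have hthis := hcd' y hy
        rw [← hxy] at hthis
        have h0 : cdist (cmod (D a + ε)) (cmod (D a + ε)) = 0 := by
          unfold cdist; rw [sub_self, cmod_zero]; simp
        rw [h0] at hthis
        have h4 := hθ4 y hy
        have h5 := hθlt y
        have h6 : 0 < min (θ y - ε) (2 * π - (θ y - ε)) :=
          lt_min (by linarith) (by linarith)
        linarith
      · exfalso
        rw [hy, hD'a, hD'x x hx] at hxy
        have hthis := hcd' x hx
        rw [← hxy.symm] at hthis
        have h0 : cdist (cmod (D a + ε)) (cmod (D a + ε)) = 0 := by
          unfold cdist; rw [sub_self, cmod_zero]; simp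
        rw [h0] at hthis
        have h4 := hθ4 x hx
        have h5 := hθlt x
        have h6 : 0 < min (θ x - ε) (2 * π - (θ x - ε)) :=
          lt_min (by linarith) (by linarith)
        linarith
      · rw [hD'x x hx, hD'x y hy] at hxy
        exact hinj hxy
    · intro v
      by_cases hv : v = a
      · rw [hv, hD'a]
        exact Set.mem_Ico.mpr ⟨cmod_nonneg _, cmod_lt _⟩
      · rw [hD'x v hv]
        exact hrange v
  have hstrict : ∀ j k, G.pos.Adj a j → G.neg.Adj a k →
      cdist (D' a) (D' j) < cdist (D' a) (D' k) := by
    intro j k hj hk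
    rw [hD'a, hD'x j hj.ne', hD'x k hk.ne']
    calc cdist (cmod (D a + ε)) (D j) ≤ δ - ε := hP j hj
      _ < δ + ε := by linarith
      _ ≤ cdist (cmod (D a + ε)) (D k) := hN k hk
  have halmost' : ∀ i j k, G.pos.Adj i j → G.neg.Adj i k →
      cdist (D' i) (D' j) ≤ δ ∧ δ ≤ cdist (D' i) (D' k) := by
    intro i j k hij hik
    constructor
    · by_cases hi : i = a
      · subst hi
        rw [hD'a, hD'x j hij.ne']
        linarith [hP j hij]
      · by_cases hj : j = a
        · subst hj
          rw [hD'x i hi, hD'a, cdist_symm]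
          linarith [hP i hij.symm]
        · rw [hD'x i hi, hD'x j hj]
          exact (halmost i j k hij hik).1
    · by_cases hi : i = a
      · subst hi
        rw [hD'a, hD'x k hik.ne']
        linarith [hN k hik]
      · by_cases hk : k = a
        · subst hk
          rw [hD'x i hi, hD'a, cdist_symm]
          linarith [hN i hik.symm]
        · rw [hD'x i hi, hD'x k hk]
          exact (halmost i j k hij hik).2
  refine ⟨hdraw, halmost', hstrict, ?_⟩
  intro b hb j k hbj hbk
  by_cases hba : b = a
  · subst hba; exact hstrict j k hbj hbk
  · by_cases hj : j = a
    · have hbja : G.pos.Adj b a := hj ▸ hbj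
      have hk : k ≠ a := by intro h; exact G.disjoint b a ⟨hbja, h ▸ hbk⟩
      rw [hj, hD'x b hba, hD'x k hk, hD'a, cdist_symm]
      calc cdist (cmod (D a + ε)) (D b) ≤ δ - ε := hP b hbja.symm
        _ < δ := by linarith
        _ ≤ cdist (D b) (D k) := (halmost b a k hbja hbk).2
    · by_cases hk : k = a
      · have hbka : G.neg.Adj b a := hk ▸ hbk
        rw [hk, hD'x b hba, hD'x j hj, hD'a,
          show cdist (D b) (cmod (D a + ε)) = cdist (cmod (D a + ε)) (D b) from
            cdist_symm _ _]
        calc cdist (D b) (D j) ≤ δ := (halmost b j a hbj hbka).1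
          _ < δ + ε := by linarith
          _ ≤ cdist (cmod (D a + ε)) (D b) := hN b hbka.symm
      · rw [hD'x b hba, hD'x j hj, hD'x k hk]
        exact hb j k hbj hbk
end

section
/- Let G be a finite graph that admits a circular arc model in which all arcs have length δ (arcs possibly open or closed at endpoints). Define the drawing D sending each vertex i to the clockwise endpoint s_i of its arc (assuming these endpoints are pairwise distinct). Then for every edge ij of G, d(s_i, s_j) ≤ δ, and for every non-edge ij, d(s_i, s_j) ≥ δ; in particular, the complete signed graph with E⁺ = E(G) and E⁻ the non-edges has an almost valid drawing in the circumference. -/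
open Real Set

lemma two_pi_pos' : (0:ℝ) < 2 * π := by positivity

lemma cmod_congr (x y : ℝ) (n : ℤ) (h : x = y + 2 * π * n) : cmod x = cmod y := by
  rw [cmod_eq_fract, cmod_eq_fract, h]
  congr 1
  have h2 : (y + 2 * π * n) / (2 * π) = y / (2 * π) + n := by
    field_simp
  rw [h2, Int.fract_add_intCast]

lemma cmod_sub_cmod (u v : ℝ) : cmod (u - v) = cmod (cmod u - cmod v) := by
  apply cmod_congr _ _ (⌊u / (2 * π)⌋ - ⌊v / (2 * π)⌋)
  unfold cmod
  push_cast
  ring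

lemma cmod_pos {x : ℝ} (h1 : -(2 * π) < x) (h2 : x < 2 * π) (h3 : x ≠ 0) :
    0 < cmod x := by
  rcases lt_or_gt_of_ne h3 with h | h
  · have he : cmod x = x + 2 * π := by
      have := cmod_congr x (x + 2 * π) (-1) (by push_cast; ring)
      rw [this, cmod_eq_self (by linarith) (by linarith)]
    linarith
  · rw [cmod_eq_self h.le h2]; exact h

lemma self_eq_cmod_add (x : ℝ) : x = cmod x + 2 * π * ⌊x / (2 * π)⌋ := by
  unfold cmod; ring

/-- If G has a circular arc model with all arcs of length δ ≤ π (arcs possibly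
open or closed at their endpoints) and pairwise distinct clockwise endpoints s,
then d(s i, s j) ≤ δ for every edge and d(s i, s j) ≥ δ for every non-edge;
in particular the complete signed graph with E⁺ = E(G) has an almost valid
drawing given by the clockwise endpoints. -/
theorem equal_length_model_gives_almost_valid {V : Type*} [Fintype V]
    (G : SimpleGraph V) (δ : ℝ) (s : V → ℝ) (bl br : V → Bool)
    (hδ : 0 < δ) (hδπ : δ ≤ π)
    (hs : Function.Injective s) (hsrange : ∀ v, s v ∈ Set.Ico (0 : ℝ) (2 * π))
    (hmodel : ∀ i j : V, i ≠ j →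
      (G.Adj i j ↔
        (arcGen (s i) δ (bl i) (br i) ∩ arcGen (s j) δ (bl j) (br j)).Nonempty)) :
    (∀ i j : V, G.Adj i j → cdist (s i) (s j) ≤ δ) ∧
    (∀ i j : V, i ≠ j → ¬ G.Adj i j → δ ≤ cdist (s i) (s j)) ∧
    IsAlmostValidDrawing ⟨G, Gᶜ, fun i j h => h.2.2 h.1⟩ s := by
  -- Part 1: edges give small distance
  have edge_le : ∀ i j : V, G.Adj i j → cdist (s i) (s j) ≤ δ := by
    intro i j hij
    obtain ⟨x, hxi, hxj⟩ := (hmodel i j hij.ne).1 hij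
    have hai : cmod (x - s i) ≤ δ := by
      cases h : br i
      · exact (hxi.2.2.2 h).le
      · exact hxi.2.2.1 h
    have haj : cmod (x - s j) ≤ δ := by
      cases h : br j
      · exact (hxj.2.2.2 h).le
      · exact hxj.2.2.1 h
    set a := cmod (x - s i) with ha
    set b := cmod (x - s j) with hb
    have han : 0 ≤ a := cmod_nonneg _
    have hbn : 0 ≤ b := cmod_nonneg _
    have halt : a < 2 * π := cmod_lt _
    have hblt : b < 2 * π := cmod_lt _
    rcases le_total a b with hab | hab
    · have h1 : s i - s j = (x - s j) - (x - s i) := by ring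
      have h2 : cmod (s i - s j) = b - a := by
        rw [h1, cmod_sub_cmod, ← ha, ← hb,
          cmod_eq_self (by linarith) (by linarith)]
      calc cdist (s i) (s j) ≤ cmod (s i - s j) := min_le_left _ _
        _ = b - a := h2
        _ ≤ δ := by linarith
    · have h1 : s j - s i = (x - s i) - (x - s j) := by ring
      have h2 : cmod (s j - s i) = a - b := by
        rw [h1, cmod_sub_cmod, ← ha, ← hb,
          cmod_eq_self (by linarith) (by linarith)]
      calc cdist (s i) (s j) ≤ cmod (s j - s i) := min_le_right _ _
        _ = a - b := h2
        _ ≤ δ := by linarith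
  -- Key: if cmod (s j - s i) < δ then the arcs intersect
  have key : ∀ i j : V, i ≠ j → cmod (s j - s i) < δ →
      (arcGen (s i) δ (bl i) (br i) ∩ arcGen (s j) δ (bl j) (br j)).Nonempty := by
    intro i j hne hlt
    set c := cmod (s j - s i) with hc
    have hsi := hsrange i
    have hsj := hsrange j
    have hc0 : 0 < c := by
      apply cmod_pos (by simp at hsi hsj ⊢; linarith [hsi.1, hsi.2, hsj.1, hsj.2])
        (by simp at hsi hsj ⊢; linarith [hsi.1, hsi.2, hsj.1, hsj.2])
      intro h0
      exact hne.symm (hs (sub_eq_zero.mp h0))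
    set ε := (δ - c) / 2 with hε
    have hε0 : 0 < ε := by simp only [hε]; linarith
    set x := cmod (s j + ε) with hx
    have hxj : cmod (x - s j) = ε := by
      have h1 : x - s j = ε + 2 * π * ((-⌊(s j + ε) / (2 * π)⌋ : ℤ) : ℝ) := by
        rw [hx]
        have := self_eq_cmod_add (s j + ε)
        push_cast
        linarith
      rw [cmod_congr _ _ _ h1]
      exact cmod_eq_self hε0.le (by linarith [pi_pos])
    have hxi : cmod (x - s i) = c + ε := by
      have h1 : x - s i = (c + ε) +
          2 * π * ((⌊(s j - s i) / (2 * π)⌋ - ⌊(s j + ε) / (2 * π)⌋ : ℤ) : ℝ) := by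
        rw [hx]
        have e1 := self_eq_cmod_add (s j + ε)
        have e2 := self_eq_cmod_add (s j - s i)
        push_cast
        rw [← hc] at e2
        linarith
      rw [cmod_congr _ _ _ h1]
      exact cmod_eq_self (by linarith) (by linarith [pi_pos])
    have hεδ : ε < δ := by simp only [hε]; linarith
    have hcεδ : c + ε < δ := by simp only [hε]; linarith
    refine ⟨x, ⟨⟨cmod_nonneg _, cmod_lt _⟩, ?_, ?_, ?_⟩,
      ⟨⟨cmod_nonneg _, cmod_lt _⟩, ?_, ?_, ?_⟩⟩
    · intro _; rw [hxi]; linarith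
    · intro _; rw [hxi]; linarith
    · intro _; rw [hxi]; linarith
    · intro _; rw [hxj]; linarith
    · intro _; rw [hxj]; linarith
    · intro _; rw [hxj]; linarith
  -- Part 2: non-edges give large distance
  have nonedge_ge : ∀ i j : V, i ≠ j → ¬ G.Adj i j → δ ≤ cdist (s i) (s j) := by
    intro i j hne hnadj
    by_contra hcon
    push_neg at hcon
    rcases min_lt_iff.mp hcon with h1 | h2
    · exact hnadj (((hmodel j i hne.symm).2 (key j i hne.symm h1)).symm)
    · exact hnadj ((hmodel i j hne).2 (key i j hne h2))
  refine ⟨edge_le, nonedge_ge, ⟨hs, hsrange⟩, δ, hδ, ?_⟩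
  intro i j k hpos hneg
  have hneg' := (SimpleGraph.compl_adj G i k).mp hneg
  exact ⟨edge_le i j hpos, nonedge_ge i k hneg'.1 hneg'.2⟩
end
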